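/- The formal power series F(q,x) counting Dyck paths by semilength (x) and number of occurrences of the factor duu (q) satisfies the algebraic equation 2qx·F = 1 - 2(1-q)x - √(1 - 4x + 4x² - 4qx²); equivalently, (2qxF - 1 + 2(1-q)x)² = 1 - 4x + 4x² - 4qx². -/

import Mathlib

/-- Height of the path after `i` steps: `true` = up, `false` = down. -/
def heights (w : List Bool) (i : ℕ) : ℤ :=
  ((w.take i).count true : ℤ) - ((w.take i).count false : ℤ)

/-- `w` is a Dyck word. -/
def IsDyck (w : List Bool) : Prop :=
  w.count true = w.count false ∧ ∀ i ≤ w.length, 0 ≤ heights w i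

instance : DecidablePred IsDyck := fun w => by unfold IsDyck; infer_instance

/-- Dyck paths of semilength `n`. -/
def DyckPath (n : ℕ) := {v : List.Vector Bool (2 * n) // IsDyck v.1}

instance (n : ℕ) : Fintype (DyckPath n) := Subtype.fintype _

/-- The containment order on Dyck paths: `γ` lies weakly below `γ'`. -/
def DyckLE {n : ℕ} (γ γ' : DyckPath n) : Prop := ∀ i, heights γ.1.1 i ≤ heights γ'.1.1 i

def DyckLT {n : ℕ} (γ γ' : DyckPath n) : Prop := DyckLE γ γ' ∧ γ ≠ γ'

def DyckCovBy {n : ℕ} (γ γ' : DyckPath n) : Prop :=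
  DyckLT γ γ' ∧ ∀ δ : DyckPath n, DyckLT γ δ → ¬ DyckLT δ γ'

/-- Number of occurrences of the factor `f` in `w`. -/
def occ (f w : List Bool) : ℕ :=
  ((Finset.range w.length).filter fun i => f <+: w.drop i).card

/-- Saturated chains of length `h` in the Dyck lattice of order `n`. -/
def SatChain (n h : ℕ) :=
  {c : Fin (h + 1) → DyckPath n // ∀ i : Fin h, DyckCovBy (c i.castSucc) (c i.succ)}

open PowerSeries

/-- `F(q,x) = ∑_γ q^{duu(γ)} x^{|γ|}`, a power series in `x` with polynomial
coefficients in `q`. -/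
noncomputable def Fduu : PowerSeries (Polynomial ℚ) :=
  PowerSeries.mk fun n => ∑ γ : DyckPath n, Polynomial.X ^ occ [false, true, true] γ.1.1

/-! ### Auxiliary development -/

open DyckStep List

section OccLemmas

lemma occ_nil (f : List Bool) : occ f [] = 0 := rfl

lemma occ_cons (f : List Bool) (x : Bool) (l : List Bool) :
    occ f (x :: l) = occ f l + (if f <+: x :: l then 1 else 0) := by
  unfold occ
  rw [Finset.card_filter, Finset.card_filter, List.length_cons,
    Finset.sum_range_succ']
  simp [List.drop_succ_cons]

/-- The pattern `duu`. -/
def pat : List Bool := [false, true, true]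

lemma occ_true_cons (l : List Bool) : occ pat (true :: l) = occ pat l := by
  rw [occ_cons]
  simp [pat, List.cons_prefix_cons]

lemma occ_append_false_cons (l l' : List Bool) :
    occ pat (l ++ false :: l') =
      occ pat l + occ pat l' + (if [true, true] <+: l' then 1 else 0) := by
  induction l with
  | nil => rw [List.nil_append, occ_cons, occ_nil]; simp [pat, List.cons_prefix_cons]
  | cons x l ih =>
      rw [List.cons_append, occ_cons, ih, occ_cons]
      have : (pat <+: x :: (l ++ false :: l')) ↔ (pat <+: x :: l) := by
        match l with
        | [] => simp [pat, List.cons_prefix_cons]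
        | [y] => simp [pat, List.cons_prefix_cons]
        | y :: z :: r => simp [pat, List.cons_prefix_cons]
      rw [if_congr this rfl rfl]
      ring

end OccLemmas

section Translation

def toW : List Bool → List DyckStep := List.map (fun b => if b then U else D)
def toB : List DyckStep → List Bool := List.map (fun s => s == U)

lemma toB_toW (l : List Bool) : toB (toW l) = l := by
  simp only [toW, toB, List.map_map]
  convert List.map_id l
  funext b; cases b <;> simp

lemma toW_toB (l : List DyckStep) : toW (toB l) = l := by
  simp only [toW, toB, List.map_map]
  convert List.map_id l
  funext s; cases s <;> simp

lemma count_toW_U (l : List Bool) : (toW l).count U = l.count true := by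
  unfold toW
  have := List.count_map_of_injective (f := fun b => if b then U else D) l
    (fun a b h => by cases a <;> cases b <;> simp_all) true
  simpa using this

lemma count_toW_D (l : List Bool) : (toW l).count D = l.count false := by
  unfold toW
  have := List.count_map_of_injective (f := fun b => if b then U else D) l
    (fun a b h => by cases a <;> cases b <;> simp_all) false
  simpa using this

lemma count_toB_true (l : List DyckStep) : (toB l).count true = l.count U := by
  conv_rhs => rw [← toW_toB l]
  rw [count_toW_U]

lemma count_toB_false (l : List DyckStep) : (toB l).count false = l.count D := by
  conv_rhs => rw [← toW_toB l]
  rw [count_toW_D]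

lemma toB_append (l l' : List DyckStep) : toB (l ++ l') = toB l ++ toB l' :=
  List.map_append

lemma toW_take (l : List Bool) (i : ℕ) : (toW l).take i = toW (l.take i) := by
  simp [toW]

lemma toB_take (l : List DyckStep) (i : ℕ) : (toB l).take i = toB (l.take i) := by
  simp [toB]

/-- A Dyck path gives a Dyck word. -/
def dw {n : ℕ} (γ : DyckPath n) : DyckWord where
  toList := toW γ.1.1
  count_U_eq_count_D := by rw [count_toW_U, count_toW_D]; exact γ.2.1
  count_D_le_count_U i := by
    have h := γ.2.2 (min i γ.1.1.length) (min_le_right _ _)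
    unfold heights at h
    rw [← List.take_take, List.take_length] at h
    show ((toW _).take i).count D ≤ ((toW _).take i).count U
    rw [toW_take, count_toW_U, count_toW_D]
    omega

lemma dw_semilength {n : ℕ} (γ : DyckPath n) : (dw γ).semilength = n := by
  have h1 : (toW γ.1.1).count U = γ.1.1.count true := count_toW_U _
  have h2 := γ.2.1
  have h3 := count_true_add_count_false γ.1.1
  have h4 : γ.1.1.length = 2 * n := γ.1.2
  show (toW γ.1.1).count U = n
  omega

/-- A Dyck word of semilength `n` gives a Dyck path. -/
def wd {n : ℕ} (p : DyckWord) (h : p.semilength = n) : DyckPath n :=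
  ⟨⟨toB p.toList, by
      show (toB p.toList).length = 2 * n
      rw [toB, List.length_map, ← p.two_mul_semilength_eq_length, h]⟩, by
    constructor
    · rw [count_toB_true, count_toB_false]; exact p.count_U_eq_count_D
    · intro i _
      unfold heights
      show (0 : ℤ) ≤ ((toB p.toList).take i).count true - ((toB p.toList).take i).count false
      rw [toB_take, count_toB_true, count_toB_false]
      have := p.count_D_le_count_U i
      omega⟩

lemma wd_dw {n : ℕ} (γ : DyckPath n) : wd (dw γ) (dw_semilength γ) = γ := by
  apply Subtype.ext
  apply Subtype.ext
  exact toB_toW γ.1.1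

lemma dw_wd {n : ℕ} (p : DyckWord) (h : p.semilength = n) : dw (wd p h) = p := by
  apply DyckWord.ext
  exact toW_toB p.toList

end Translation

section Sums

/-- Number of `duu` occurrences of a Dyck word. -/
def ow (p : DyckWord) : ℕ := occ pat (toB p.toList)

/-- Dyck words of semilength `n` as a finset. -/
noncomputable def Dn (n : ℕ) : Finset DyckWord :=
  Finset.univ.map (Function.Embedding.subtype (fun p : DyckWord => p.semilength = n))

lemma mem_Dn {n : ℕ} {p : DyckWord} : p ∈ Dn n ↔ p.semilength = n := by
  simp [Dn]

lemma semilength_ne_zero {n : ℕ} {p : DyckWord} (h : p.semilength = n + 1) : p ≠ 0 := by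
  rintro rfl
  simp at h

noncomputable def q : Polynomial ℚ := Polynomial.X

/-- `f n` : the sum over Dyck words of semilength `n`. -/
noncomputable def fD (n : ℕ) : Polynomial ℚ := ∑ p ∈ Dn n, q ^ ow p

noncomputable def eD (p : DyckWord) : ℕ := if [true, true] <+: toB p.toList then 1 else 0

noncomputable def gD (n : ℕ) : Polynomial ℚ := ∑ p ∈ Dn n, q ^ (ow p + eD p)

noncomputable def hD (n : ℕ) : Polynomial ℚ :=
  ∑ p ∈ Dn n, (if [true, true] <+: toB p.toList then 0 else q ^ ow p)

lemma Dn_zero : Dn 0 = {(0 : DyckWord)} := by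
  ext p
  rw [mem_Dn, Finset.mem_singleton]
  constructor
  · intro h
    have := p.two_mul_semilength_eq_length
    rw [h, mul_zero] at this
    exact DyckWord.toList_eq_nil.mp (List.length_eq_zero_iff.mp this.symm)
  · rintro rfl; rfl

lemma ow_zero : ow (0 : DyckWord) = 0 := rfl

lemma fD_zero : fD 0 = 1 := by
  rw [fD, Dn_zero, Finset.sum_singleton, ow_zero, pow_zero]

lemma hD_zero : hD 0 = 1 := by
  rw [hD, Dn_zero, Finset.sum_singleton]
  have : ¬ ([true, true] <+: toB (0 : DyckWord).toList) := by
    intro h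
    have h0 : toB (0 : DyckWord).toList = [] := rfl
    rw [h0] at h
    simpa using h.length_le
  rw [if_neg this, ow_zero, pow_zero]

lemma toB_nest_add (a b : DyckWord) :
    toB (a.nest + b).toList = true :: (toB a.toList ++ false :: toB b.toList) := by
  show toB (([U] ++ a.toList ++ [D]) ++ b.toList) = _
  rw [toB_append, toB_append, toB_append]
  simp [toB]

lemma ow_nest_add (a b : DyckWord) :
    ow (a.nest + b) = ow a + ow b + eD b := by
  rw [ow, toB_nest_add, occ_true_cons, occ_append_false_cons, ow, ow, eD]

lemma tt_prefix_nest_add (a b : DyckWord) :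
    ([true, true] <+: toB (a.nest + b).toList) ↔ a ≠ 0 := by
  rw [toB_nest_add]
  rcases eq_or_ne a 0 with rfl | ha
  · have : toB (0 : DyckWord).toList = [] := rfl
    simp [this, List.cons_prefix_cons]
  · obtain ⟨x, t, hxt⟩ := List.exists_cons_of_ne_nil (DyckWord.toList_ne_nil.mpr ha)
    have hx : x = U := by
      have h1 : a.toList.head? = some U := by
        rw [List.head?_eq_head (DyckWord.toList_ne_nil.mpr ha),
          a.head_eq_U (DyckWord.toList_ne_nil.mpr ha)]
      rw [hxt] at h1
      simpa using h1
    simp [ha, hxt, hx, toB, List.cons_prefix_cons]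

/-- The first-return decomposition identity. -/
lemma fD_succ (n : ℕ) :
    fD (n + 1) = ∑ ij ∈ Finset.HasAntidiagonal.antidiagonal n, fD ij.1 * gD ij.2 := by
  have : ∑ ij ∈ Finset.HasAntidiagonal.antidiagonal n, fD ij.1 * gD ij.2
      = ∑ x ∈ (Finset.HasAntidiagonal.antidiagonal n).sigma (fun ij => Dn ij.1 ×ˢ Dn ij.2),
          q ^ ow x.2.1 * q ^ (ow x.2.2 + eD x.2.2) := by
    rw [Finset.sum_sigma]
    refine Finset.sum_congr rfl fun ij _ => ?_
    rw [fD, gD, Finset.sum_mul_sum, Finset.sum_product]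
  rw [this, fD]
  refine Finset.sum_nbij' (i := fun p => ⟨(p.insidePart.semilength, p.outsidePart.semilength),
      (p.insidePart, p.outsidePart)⟩) (j := fun x => x.2.1.nest + x.2.2) ?_ ?_ ?_ ?_ ?_
  · intro p hp
    rw [mem_Dn] at hp
    have hne := semilength_ne_zero hp
    have hsum := DyckWord.semilength_insidePart_add_semilength_outsidePart_add_one hne
    simp only [Finset.mem_sigma, Finset.HasAntidiagonal.mem_antidiagonal, Finset.mem_product, mem_Dn]
    exact ⟨by omega, trivial, trivial⟩
  · intro x hx
    rw [Finset.mem_sigma, Finset.HasAntidiagonal.mem_antidiagonal, Finset.mem_product, mem_Dn, mem_Dn] at hx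
    obtain ⟨h1, h2, h3⟩ := hx
    rw [mem_Dn, DyckWord.semilength_add, DyckWord.semilength_nest]
    omega
  · intro p hp
    rw [mem_Dn] at hp
    exact DyckWord.nest_insidePart_add_outsidePart (semilength_ne_zero hp)
  · intro x hx
    rw [Finset.mem_sigma, Finset.HasAntidiagonal.mem_antidiagonal, Finset.mem_product, mem_Dn, mem_Dn] at hx
    obtain ⟨h1, h2, h3⟩ := hx
    have hne : x.2.1.nest ≠ 0 := DyckWord.nest_ne_zero
    have e1 : (x.2.1.nest + x.2.2).insidePart = x.2.1 := by
      rw [DyckWord.insidePart_add hne, DyckWord.insidePart_nest]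
    have e2 : (x.2.1.nest + x.2.2).outsidePart = x.2.2 := by
      rw [DyckWord.outsidePart_add hne, DyckWord.outsidePart_nest, zero_add]
    obtain ⟨⟨i, j⟩, a, b⟩ := x
    simp only at e1 e2 h2 h3 ⊢
    refine Sigma.ext ?_ (heq_of_eq ?_)
    · simp only [e1, e2, h2, h3]
    · simp only [e1, e2]
  · intro p hp
    rw [mem_Dn] at hp
    have hne := semilength_ne_zero hp
    conv_lhs => rw [← DyckWord.nest_insidePart_add_outsidePart hne]
    rw [ow_nest_add, pow_add, pow_add]
    ring

lemma hD_succ (n : ℕ) : hD (n + 1) = gD n := by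
  have step1 : hD (n + 1) = ∑ p ∈ (Dn (n + 1)).filter (fun p => p.insidePart = 0), q ^ ow p := by
    rw [hD, Finset.sum_filter]
    refine Finset.sum_congr rfl fun p hp => ?_
    rw [mem_Dn] at hp
    have hne := semilength_ne_zero hp
    have := tt_prefix_nest_add p.insidePart p.outsidePart
    rw [DyckWord.nest_insidePart_add_outsidePart hne] at this
    rcases eq_or_ne p.insidePart 0 with h0 | h0
    · rw [if_neg (fun hh => (this.mp hh) h0), if_pos h0]
    · rw [if_pos (this.mpr h0), if_neg h0]
  rw [step1, gD]
  refine Finset.sum_nbij' (i := fun p => p.outsidePart) (j := fun b => (0 : DyckWord).nest + b)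
    ?_ ?_ ?_ ?_ ?_
  · intro p hp
    rw [Finset.mem_filter, mem_Dn] at hp
    obtain ⟨hp, h0⟩ := hp
    have hne := semilength_ne_zero hp
    have hsum := DyckWord.semilength_insidePart_add_semilength_outsidePart_add_one hne
    rw [h0, DyckWord.semilength_zero] at hsum
    simp only [mem_Dn]; omega
  · intro b hb
    rw [mem_Dn] at hb
    rw [Finset.mem_filter, mem_Dn, DyckWord.semilength_add, DyckWord.semilength_nest,
      DyckWord.semilength_zero, DyckWord.insidePart_add DyckWord.nest_ne_zero,
      DyckWord.insidePart_nest]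
    exact ⟨by omega, rfl⟩
  · intro p hp
    rw [Finset.mem_filter, mem_Dn] at hp
    obtain ⟨hp, h0⟩ := hp
    have hne := semilength_ne_zero hp
    conv_rhs => rw [← DyckWord.nest_insidePart_add_outsidePart hne]
    rw [h0]
  · intro b hb
    show ((0 : DyckWord).nest + b).outsidePart = b
    rw [DyckWord.outsidePart_add DyckWord.nest_ne_zero, DyckWord.outsidePart_nest, zero_add]
  · intro p hp
    rw [Finset.mem_filter, mem_Dn] at hp
    obtain ⟨hp, h0⟩ := hp
    have hne := semilength_ne_zero hp
    conv_lhs => rw [← DyckWord.nest_insidePart_add_outsidePart hne]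
    rw [h0, ow_nest_add, ow_zero, zero_add]

lemma gD_eq (n : ℕ) : gD n = q * fD n + (1 - q) * hD n := by
  rw [gD, fD, hD, Finset.mul_sum, Finset.mul_sum, ← Finset.sum_add_distrib]
  refine Finset.sum_congr rfl fun p _ => ?_
  rw [eD]
  split_ifs with h
  · rw [pow_succ]; ring
  · rw [add_zero]; ring

lemma sum_fD_hD (n : ℕ) :
    ∑ ij ∈ Finset.HasAntidiagonal.antidiagonal n, fD ij.1 * hD ij.2
      = 2 * fD n - (if n = 0 then 1 else 0) := by
  rw [Finset.Nat.sum_antidiagonal_eq_sum_range_succ_mk, Finset.sum_range_succ,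
    Nat.sub_self, hD_zero, mul_one]
  cases n with
  | zero =>
      rw [Finset.range_zero, Finset.sum_empty, fD_zero, if_pos rfl, zero_add]
      norm_num
  | succ m =>
      have : ∑ k ∈ Finset.range (m + 1), fD k * hD (m + 1 - k)
          = ∑ k ∈ Finset.range (m + 1), fD k * gD (m - k) := by
        refine Finset.sum_congr rfl fun k hk => ?_
        rw [Finset.mem_range] at hk
        have : m + 1 - k = (m - k) + 1 := by omega
        rw [this, hD_succ]
      rw [this, ← Finset.Nat.sum_antidiagonal_eq_sum_range_succ_mk
        (f := fun ij => fD ij.1 * gD ij.2), ← fD_succ]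
      simp only [Nat.succ_ne_zero, if_false]
      ring

/-- The key coefficient recursion. -/
lemma key_coeff (n : ℕ) :
    fD (n + 1) = (1 - q) * (2 * fD n - (if n = 0 then 1 else 0))
      + q * ∑ ij ∈ Finset.HasAntidiagonal.antidiagonal n, fD ij.1 * fD ij.2 := by
  rw [fD_succ]
  have : ∑ ij ∈ Finset.HasAntidiagonal.antidiagonal n, fD ij.1 * gD ij.2
      = q * (∑ ij ∈ Finset.HasAntidiagonal.antidiagonal n, fD ij.1 * fD ij.2)
        + (1 - q) * ∑ ij ∈ Finset.HasAntidiagonal.antidiagonal n, fD ij.1 * hD ij.2 := by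
    rw [Finset.mul_sum, Finset.mul_sum, ← Finset.sum_add_distrib]
    refine Finset.sum_congr rfl fun ij _ => ?_
    rw [gD_eq]; ring
  rw [this, sum_fD_hD]
  ring

lemma coeff_Fduu (n : ℕ) : (PowerSeries.coeff (R := Polynomial ℚ) n) Fduu = fD n := by
  rw [Fduu, PowerSeries.coeff_mk]
  have : fD n = ∑ x : {p : DyckWord // p.semilength = n}, q ^ ow x.1 := by
    rw [fD, Dn, Finset.sum_map]
    rfl
  rw [this]
  refine Finset.sum_nbij' (i := fun γ => (⟨dw γ, dw_semilength γ⟩ : {p : DyckWord // p.semilength = n}))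
    (j := fun x => wd x.1 x.2) (fun _ _ => Finset.mem_univ _) (fun _ _ => Finset.mem_univ _)
    ?_ ?_ ?_
  · intro γ _
    exact wd_dw γ
  · intro x _
    exact Subtype.ext (dw_wd x.1 x.2)
  · intro γ _
    have : ow (dw γ) = occ pat γ.1.1 := by rw [ow, dw, toB_toW]
    rw [this]
    rfl

end Sums

section Key

open PowerSeries

noncomputable def Q : PowerSeries (Polynomial ℚ) := PowerSeries.C (R := Polynomial ℚ) Polynomial.X

lemma coeff_Q_mul (f : PowerSeries (Polynomial ℚ)) (m : ℕ) :
    (PowerSeries.coeff (R := Polynomial ℚ) m) (Q * f) = q * (PowerSeries.coeff (R := Polynomial ℚ) m) f := by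
  rw [Q, PowerSeries.coeff_C_mul]; rfl

lemma coeff_A (m : ℕ) :
    (PowerSeries.coeff (R := Polynomial ℚ) m) (2 * Fduu - 1)
      = 2 * fD m - (if m = 0 then 1 else 0) := by
  rw [map_sub, PowerSeries.coeff_one, two_mul, map_add, coeff_Fduu]
  ring

lemma coeff_sq (m : ℕ) :
    (PowerSeries.coeff (R := Polynomial ℚ) m) (Fduu ^ 2)
      = ∑ ij ∈ Finset.HasAntidiagonal.antidiagonal m, fD ij.1 * fD ij.2 := by
  rw [sq, PowerSeries.coeff_mul]
  exact Finset.sum_congr rfl fun ij _ => by rw [coeff_Fduu, coeff_Fduu]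

lemma key_series :
    Fduu = 1 + ((1 - Q) * (2 * Fduu - 1) + Q * Fduu ^ 2) * X := by
  apply PowerSeries.ext
  intro n
  cases n with
  | zero =>
      rw [coeff_Fduu, fD_zero, map_add, PowerSeries.coeff_zero_mul_X]
      simp
  | succ m =>
      rw [coeff_Fduu, map_add, PowerSeries.coeff_one, if_neg (Nat.succ_ne_zero m), zero_add,
        PowerSeries.coeff_succ_mul_X, map_add]
      have e1 : (1 - Q) * (2 * Fduu - 1) = (2 * Fduu - 1) - Q * (2 * Fduu - 1) := by ring
      rw [e1, map_sub, coeff_Q_mul, coeff_A, coeff_Q_mul, coeff_sq]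
      linear_combination key_coeff m

end Key

/-- `2qx·F = 1 - 2(1-q)x - √(1-4x+4x²-4qx²)`, stated algebraically as
`(2qxF - 1 + 2(1-q)x)² = 1 - 4x + 4x² - 4qx²`. -/
theorem Fduu_algebraic_equation :
    letI q : PowerSeries (Polynomial ℚ) := PowerSeries.C (R := Polynomial ℚ) Polynomial.X
    (2 * q * X * Fduu - 1 + 2 * (1 - q) * X) ^ 2 = 1 - 4 * X + 4 * X ^ 2 - 4 * q * X ^ 2 := by
  have h := key_series
  show (2 * Q * X * Fduu - 1 + 2 * (1 - Q) * X) ^ 2 = 1 - 4 * X + 4 * X ^ 2 - 4 * Q * X ^ 2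
  linear_combination (-4 * Q * X) * h
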